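/- arXiv:1711.02756 — 2 statements merged into one kernel-verified Lean document; each statement's English description precedes it below -/
import Mathlib

section
/- Let S be a finite p-group. If K and L are normal subgroups of S each admitting a chain of normal subgroups of S satisfying Oliver's condition (∗) (i.e., 1 = Q₀ ≤ ⋯ ≤ Qₙ = K with Qᵢ ⊴ S and [Ω₁(C_S(Q_{i-1})), Qᵢ; p-1] = 1, and similarly 1 = R₀ ≤ ⋯ ≤ R_m = L), then the product KL admits such a chain, namely 1 = Q₀ ≤ ⋯ ≤ Qₙ = K ≤ KR₁ ≤ ⋯ ≤ KR_m = KL. -/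
/-- Iterated commutator of subgroups: `[A,B;0] = A`, `[A,B;k+1] = ⁅[A,B;k], B⁆`,
so `[A,B;1] = ⁅A,B⁆` and `[A,B;k] = [[A,B;k-1],B]`. -/
def iterCommutator {G : Type*} [Group G] (A B : Subgroup G) : ℕ → Subgroup G
  | 0 => A
  | k + 1 => ⁅iterCommutator A B k, B⁆

/-- `Ω₁(P)`: the subgroup generated by the elements of `P` of order dividing `p`. -/
def Omega1 {G : Type*} [Group G] (p : ℕ) (P : Subgroup G) : Subgroup G :=
  Subgroup.closure {x | x ∈ P ∧ x ^ p = 1}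

/-- Oliver's condition (∗) for a chain `⊥ = Q 0 ≤ Q 1 ≤ ⋯ ≤ Q n` of normal subgroups:
`[Ω₁(C_G(Q i)), Q (i+1); p-1] = 1` for all `i < n`. -/
def IsOliverChain {G : Type*} [Group G] (p : ℕ) (Q : ℕ → Subgroup G) (n : ℕ) : Prop :=
  Q 0 = ⊥ ∧ (∀ i < n, Q i ≤ Q (i + 1)) ∧ (∀ i ≤ n, (Q i).Normal) ∧
    ∀ i < n,
      iterCommutator (Omega1 p (Subgroup.centralizer (Q i : Set G))) (Q (i + 1)) (p - 1) = ⊥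

/-- A (normal) subgroup `K` admits a chain witnessing Oliver's condition (∗). -/
def HasOliverChain {G : Type*} [Group G] (p : ℕ) (K : Subgroup G) : Prop :=
  ∃ n Q, IsOliverChain p Q n ∧ Q n = K

/-- The Oliver subgroup `𝔛(G)`: the largest normal subgroup of `G` admitting a chain of
`G`-normal subgroups satisfying Oliver's condition (∗). -/
def OliverSubgroup (p : ℕ) (G : Type*) [Group G] : Subgroup G :=
  sSup {K | HasOliverChain p K}

/-- `E` is an elementary abelian `p`-subgroup. -/
def IsElemAbelian {G : Type*} [Group G] (p : ℕ) (E : Subgroup G) : Prop :=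
  (∀ a ∈ E, ∀ b ∈ E, a * b = b * a) ∧ ∀ x ∈ E, x ^ p = 1

/-- The rank of a finite elementary abelian `p`-subgroup `E` (so `|E| = p ^ elemRank p E`). -/
noncomputable def elemRank {G : Type*} [Group G] (p : ℕ) (E : Subgroup G) : ℕ :=
  (Nat.card E).factorization p

/-- The `p`-rank of `G`: the maximal rank of an elementary abelian `p`-subgroup. -/
noncomputable def pRank (p : ℕ) (G : Type*) [Group G] : ℕ :=
  sSup {n | ∃ E : Subgroup G, IsElemAbelian p E ∧ elemRank p E = n}

/-- The Thompson subgroup `J(G)`, generated by all elementary abelian `p`-subgroups of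
rank equal to the `p`-rank of `G`. -/
def Thompson (p : ℕ) (G : Type*) [Group G] : Subgroup G :=
  sSup {E | IsElemAbelian p E ∧ elemRank p E = pRank p G}

section Aux

variable {G : Type*} [Group G]

open scoped commutatorElement

lemma Omega1_le (p : ℕ) (P : Subgroup G) : Omega1 p P ≤ P :=
  (Subgroup.closure_le _).mpr fun _ hx => hx.1

lemma Omega1_mono (p : ℕ) {P P' : Subgroup G} (h : P ≤ P') : Omega1 p P ≤ Omega1 p P' :=
  Subgroup.closure_mono fun x hx => ⟨h hx.1, hx.2⟩

lemma iterCommutator_mono_left {A A' B : Subgroup G} (h : A ≤ A') (k : ℕ) :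
    iterCommutator A B k ≤ iterCommutator A' B k := by
  induction k with
  | zero => exact h
  | succ k ih => exact Subgroup.commutator_mono ih le_rfl

lemma centralizer_normal {K : Subgroup G} (hK : K.Normal) :
    (Subgroup.centralizer (K : Set G)).Normal := by
  constructor
  intro n hn g
  rw [Subgroup.mem_centralizer_iff] at hn ⊢
  intro h hh
  have h' : g⁻¹ * h * g ∈ K := by
    have := hK.conj_mem h hh g⁻¹
    simpa using this
  have := hn _ h'
  have : g * ((g⁻¹ * h * g) * n) * g⁻¹ = g * (n * (g⁻¹ * h * g)) * g⁻¹ := by rw [this]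
  calc h * (g * n * g⁻¹) = g * ((g⁻¹ * h * g) * n) * g⁻¹ := by group
    _ = g * (n * (g⁻¹ * h * g)) * g⁻¹ := this
    _ = g * n * g⁻¹ * h := by group

lemma Omega1_normal (p : ℕ) {P : Subgroup G} (hP : P.Normal) : (Omega1 p P).Normal := by
  constructor
  intro n hn g
  induction hn using Subgroup.closure_induction with
  | mem x hx =>
    apply Subgroup.subset_closure
    refine ⟨hP.conj_mem x hx.1 g, ?_⟩
    rw [conj_pow, hx.2, mul_one, mul_inv_cancel]
  | one => simpa using (Subgroup.one_mem _)
  | mul x y hx hy hx' hy' =>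
    have : g * (x * y) * g⁻¹ = (g * x * g⁻¹) * (g * y * g⁻¹) := by group
    rw [this]; exact mul_mem hx' hy'
  | inv x hx hx' =>
    have : g * x⁻¹ * g⁻¹ = (g * x * g⁻¹)⁻¹ := by group
    rw [this]; exact inv_mem hx'

/-- If `H` centralizes `K` and `⁅H, B⁆` is normal, then `⁅H, K ⊔ B⁆ ≤ ⁅H, B⁆`. -/
lemma commutator_sup_le {H K B : Subgroup G} (hHK : H ≤ Subgroup.centralizer (K : Set G))
    (hN : (⁅H, B⁆ : Subgroup G).Normal) : ⁅H, K ⊔ B⁆ ≤ ⁅H, B⁆ := by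
  rw [Subgroup.commutator_le]
  intro h hh x hx
  rw [Subgroup.sup_eq_closure] at hx
  induction hx using Subgroup.closure_induction with
  | mem y hy =>
    rcases hy with hy | hy
    · have : h * y = y * h := ((Subgroup.mem_centralizer_iff.mp (hHK hh)) y hy).symm
      have h1 : ⁅h, y⁆ = 1 := commutatorElement_eq_one_iff_mul_comm.mpr this
      rw [h1]; exact one_mem _
    · exact Subgroup.commutator_mem_commutator hh hy
  | one => rw [commutatorElement_one_right]; exact one_mem _
  | mul y z hy hz hy' hz' =>
    have : ⁅h, y * z⁆ = ⁅h, y⁆ * (y * ⁅h, z⁆ * y⁻¹) := by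
      simp only [commutatorElement_def]; group
    rw [this]
    exact mul_mem hy' (hN.conj_mem _ hz' y)
  | inv y hy hy' =>
    have : ⁅h, y⁻¹⁆ = y⁻¹ * ⁅h, y⁆⁻¹ * (y⁻¹)⁻¹ := by
      simp only [commutatorElement_def]; group
    rw [this]
    exact hN.conj_mem _ (inv_mem hy') y⁻¹

/-- Key step: if `[Ω₁(C_G(Rj)), B; k] = 1` then `[Ω₁(C_G(K ⊔ Rj)), K ⊔ B; k] = 1`,
for normal subgroups `K`, `B`, `Rj`. -/
lemma key_step (p k : ℕ) {K B Rj : Subgroup G} (hK : K.Normal) (hB : B.Normal)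
    (hRj : Rj.Normal)
    (h : iterCommutator (Omega1 p (Subgroup.centralizer (Rj : Set G))) B k = ⊥) :
    iterCommutator (Omega1 p (Subgroup.centralizer ((K ⊔ Rj : Subgroup G) : Set G)))
      (K ⊔ B) k = ⊥ := by
  set A := Omega1 p (Subgroup.centralizer ((K ⊔ Rj : Subgroup G) : Set G)) with hA
  have hsupN : (K ⊔ Rj).Normal := Subgroup.sup_normal K Rj
  have hAnormal : A.Normal := Omega1_normal p (centralizer_normal hsupN)
  have hAK : A ≤ Subgroup.centralizer (K : Set G) :=
    (Omega1_le p _).trans (Subgroup.centralizer_le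
      (SetLike.coe_subset_coe.mpr (le_sup_left : K ≤ K ⊔ Rj)))
  -- D j := iterCommutator A B j is normal and centralizes K
  have hD : ∀ j, (iterCommutator A B j).Normal ∧
      iterCommutator A B j ≤ Subgroup.centralizer (K : Set G) := by
    intro j
    induction j with
    | zero => exact ⟨hAnormal, hAK⟩
    | succ j ih =>
      have hnorm : (⁅iterCommutator A B j, B⁆ : Subgroup G).Normal := by
        have := ih.1; exact Subgroup.commutator_normal _ _
      refine ⟨hnorm, ?_⟩
      have hcent : (Subgroup.centralizer (K : Set G)).Normal := centralizer_normal hK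
      calc ⁅iterCommutator A B j, B⁆
          ≤ ⁅Subgroup.centralizer (K : Set G), B⁆ := Subgroup.commutator_mono ih.2 le_rfl
        _ ≤ Subgroup.centralizer (K : Set G) := Subgroup.commutator_le_left _ _
  -- C j := iterCommutator A (K ⊔ B) j ≤ D j
  have hC : ∀ j, iterCommutator A (K ⊔ B) j ≤ iterCommutator A B j := by
    intro j
    induction j with
    | zero => exact le_rfl
    | succ j ih =>
      have h1 : (⁅iterCommutator A B j, B⁆ : Subgroup G).Normal := by
        have := (hD j).1; exact Subgroup.commutator_normal _ _
      calc ⁅iterCommutator A (K ⊔ B) j, K ⊔ B⁆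
          ≤ ⁅iterCommutator A B j, K ⊔ B⁆ := Subgroup.commutator_mono ih le_rfl
        _ ≤ ⁅iterCommutator A B j, B⁆ := commutator_sup_le (hD j).2 h1
  have hAle : A ≤ Omega1 p (Subgroup.centralizer (Rj : Set G)) :=
    Omega1_mono p (Subgroup.centralizer_le
      (SetLike.coe_subset_coe.mpr (le_sup_right : Rj ≤ K ⊔ Rj)))
  have : iterCommutator A (K ⊔ B) k ≤ ⊥ := by
    calc iterCommutator A (K ⊔ B) k ≤ iterCommutator A B k := hC k
      _ ≤ iterCommutator (Omega1 p (Subgroup.centralizer (Rj : Set G))) B k :=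
        iterCommutator_mono_left hAle k
      _ = ⊥ := h
  exact le_bot_iff.mp this

end Aux

/-- if normal subgroups `K` and `L` of `S` each admit a chain satisfying
Oliver's condition (∗), then so does `KL`, namely the concatenated chain
`⊥ = Q 0 ≤ ⋯ ≤ Q n = K ≤ K(R 1) ≤ ⋯ ≤ K(R m) = KL`. -/
theorem product_chain (p : ℕ) [Fact p.Prime] (S : Type*) [Group S] [Fintype S]
    (hS : IsPGroup p S) (K L : Subgroup S) (hK : K.Normal) (hL : L.Normal)
    (n m : ℕ) (Q R : ℕ → Subgroup S)
    (hQ : IsOliverChain p Q n) (hQn : Q n = K)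
    (hR : IsOliverChain p R m) (hRm : R m = L) :
    IsOliverChain p (fun i => if i ≤ n then Q i else K ⊔ R (i - n)) (n + m) ∧
      (fun i => if i ≤ n then Q i else K ⊔ R (i - n)) (n + m) = K ⊔ L := by
  obtain ⟨hQ0, hQmono, hQnorm, hQcomm⟩ := hQ
  obtain ⟨hR0, hRmono, hRnorm, hRcomm⟩ := hR
  -- the chain value at index n ≤ i equals K ⊔ R (i - n), even at i = n
  have key : ∀ j < m, iterCommutator
      (Omega1 p (Subgroup.centralizer ((K ⊔ R j : Subgroup S) : Set S)))
      (K ⊔ R (j + 1)) (p - 1) = ⊥ := by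
    intro j hj
    exact key_step p (p - 1) hK (hRnorm (j + 1) hj) (hRnorm j (le_of_lt hj)) (hRcomm j hj)
  constructor
  · refine ⟨?_, ?_, ?_, ?_⟩
    · simp [Nat.zero_le, hQ0]
    · intro i hi
      by_cases h1 : i + 1 ≤ n
      · have h0 : i ≤ n := Nat.le_of_succ_le h1
        simp only [h0, h1, if_true]
        exact hQmono i (Nat.lt_of_succ_le h1)
      · by_cases h0 : i ≤ n
        · have hin : i = n := le_antisymm h0 (by omega)
          simp only [h0, h1, if_true, if_false]
          rw [hin, hQn]
          exact le_sup_left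
        · simp only [h0, h1, if_false]
          have h2 : i - n < m := by omega
          have h3 : i + 1 - n = (i - n) + 1 := by omega
          rw [h3]
          exact sup_le_sup_left (hRmono (i - n) h2) K
    · intro i hi
      by_cases h0 : i ≤ n
      · simp only [h0, if_true]; exact hQnorm i h0
      · simp only [h0, if_false]
        have := hRnorm (i - n) (by omega)
        exact Subgroup.sup_normal K (R (i - n))
    · intro i hi
      by_cases h1 : i + 1 ≤ n
      · have h0 : i ≤ n := Nat.le_of_succ_le h1
        simp only [h0, h1, if_true]
        exact hQcomm i (Nat.lt_of_succ_le h1)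
      · by_cases h0 : i ≤ n
        · have hin : i = n := le_antisymm h0 (by omega)
          have hm : 0 < m := by omega
          simp only [h0, h1, if_true, if_false]
          rw [hin, hQn]
          have h3 : n + 1 - n = 1 := by omega
          rw [h3]
          rw [show ((K : Subgroup S) : Set S) = ((K ⊔ R 0 : Subgroup S) : Set S) from by
            rw [hR0, sup_bot_eq]]
          exact key 0 hm
        · simp only [h0, h1, if_false]
          have h2 : i - n < m := by omega
          have h3 : i + 1 - n = (i - n) + 1 := by omega
          rw [h3]
          exact key (i - n) h2
  · by_cases hm : m = 0
    · subst hm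
      simp only [Nat.add_zero, le_refl, if_true, hQn]
      rw [← hRm, hR0, sup_bot_eq]
    · have : ¬ (n + m ≤ n) := by omega
      simp only [this, if_false, Nat.add_sub_cancel_left, hRm]
end

section
/- Let S be a finite p-group for odd p, and suppose every subgroup L with 𝔛(S) ≤ L ≤ J(S)𝔛(S) is normal in S. If 𝔛(S) ≤ L ≤ J(S)𝔛(S), then 𝔛(L) = 𝔛(S). -/
namespace OliverAux

open Subgroup
open scoped commutatorElement

variable {G : Type*} [Group G]

lemma omega1_le {p : ℕ} {P : Subgroup G} : Omega1 p P ≤ P :=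
  (Subgroup.closure_le P).2 fun _ hx => hx.1

lemma omega1_mono {p : ℕ} {P Q : Subgroup G} (h : P ≤ Q) : Omega1 p P ≤ Omega1 p Q :=
  Subgroup.closure_mono fun _ hx => ⟨h hx.1, hx.2⟩

lemma centralizer_normal {K : Subgroup G} (hK : K.Normal) :
    (Subgroup.centralizer (K : Set G)).Normal := by
  constructor
  intro x hx g
  intro k hk
  have h1 : (g⁻¹ * k * g) * x = x * (g⁻¹ * k * g) := by
    have := hK.conj_mem k hk g⁻¹
    rw [inv_inv] at this
    exact hx _ this
  calc k * (g * x * g⁻¹) = g * ((g⁻¹ * k * g) * x) * g⁻¹ := by group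
    _ = g * (x * (g⁻¹ * k * g)) * g⁻¹ := by rw [h1]
    _ = (g * x * g⁻¹) * k := by group

lemma omega1_normal {p : ℕ} {P : Subgroup G} (hP : P.Normal) : (Omega1 p P).Normal := by
  constructor
  intro n hn g
  induction hn using Subgroup.closure_induction with
  | mem x hx =>
      refine Subgroup.subset_closure ⟨hP.conj_mem x hx.1 g, ?_⟩
      rw [conj_pow, hx.2, mul_one, mul_inv_cancel]
  | one => simpa using (Omega1 p P).one_mem
  | mul x y _ _ px py =>
      have : g * (x * y) * g⁻¹ = (g * x * g⁻¹) * (g * y * g⁻¹) := by group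
      rw [this]; exact mul_mem px py
  | inv x _ px =>
      have : g * x⁻¹ * g⁻¹ = (g * x * g⁻¹)⁻¹ := by group
      rw [this]; exact inv_mem px

lemma commutator_le_of_le_normal {H K M : Subgroup G} (h : H ≤ M) (hM : M.Normal) :
    ⁅H, K⁆ ≤ M := by
  rw [Subgroup.commutator_le]
  intro a ha b hb
  have h2 : b * a⁻¹ * b⁻¹ ∈ M := hM.conj_mem _ (M.inv_mem (h ha)) b
  have : ⁅a, b⁆ = a * (b * a⁻¹ * b⁻¹) := by group
  rw [this]; exact M.mul_mem (h ha) h2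

lemma iterCommutator_mono {A A' B B' : Subgroup G} (hA : A ≤ A') (hB : B ≤ B') :
    ∀ k, iterCommutator A B k ≤ iterCommutator A' B' k
  | 0 => hA
  | (k + 1) => Subgroup.commutator_mono (iterCommutator_mono hA hB k) hB

lemma iterCommutator_map {G' : Type*} [Group G'] (f : G →* G') (A B : Subgroup G) :
    ∀ k, Subgroup.map f (iterCommutator A B k) =
      iterCommutator (Subgroup.map f A) (Subgroup.map f B) k
  | 0 => rfl
  | (k + 1) => by
      show Subgroup.map f ⁅iterCommutator A B k, B⁆ = _
      rw [Subgroup.map_commutator, iterCommutator_map f A B k]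
      rfl

lemma iterCommutator_eq_bot_of {A B : Subgroup G} {j k : ℕ}
    (h : iterCommutator A B j = ⊥) (hjk : j ≤ k) : iterCommutator A B k = ⊥ := by
  obtain ⟨d, rfl⟩ := Nat.exists_eq_add_of_le hjk
  induction d with
  | zero => exact h
  | succ d ih =>
      show ⁅iterCommutator A B (j + d), B⁆ = ⊥
      rw [ih (Nat.le_add_right j d), Subgroup.commutator_bot_left]

lemma iterCommutator_normal {A B : Subgroup G} (hA : A.Normal) (hB : B.Normal) :
    ∀ k, (iterCommutator A B k).Normal
  | 0 => hA
  | (k + 1) => by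
      haveI := iterCommutator_normal hA hB k
      haveI := hB
      exact Subgroup.commutator_normal _ _

lemma commutator_sup_le_of_centralizes {H K B N : Subgroup G}
    (h1 : H ≤ Subgroup.centralizer (K : Set G)) (h2 : ⁅H, B⁆ ≤ N)
    (h3 : ∀ g ∈ K ⊔ B, ∀ y ∈ N, g * y * g⁻¹ ∈ N) :
    ⁅H, K ⊔ B⁆ ≤ N := by
  rw [Subgroup.commutator_le]
  intro h hH w hw
  rw [Subgroup.sup_eq_closure] at hw
  induction hw using Subgroup.closure_induction with
  | mem x hx =>
      rcases hx with hx | hx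
      · have hx' : (x : G) ∈ K := hx
        have : ⁅h, x⁆ = 1 :=
          commutatorElement_eq_one_iff_mul_comm.2 (h1 hH x hx').symm
        rw [this]; exact N.one_mem
      · exact h2 (Subgroup.commutator_mem_commutator hH hx)
  | one =>
      have : ⁅h, (1 : G)⁆ = 1 := commutatorElement_one_right h
      rw [this]; exact N.one_mem
  | mul x y hx _ px py =>
      have hx' : x ∈ K ⊔ B := by rw [Subgroup.sup_eq_closure]; exact hx
      have : ⁅h, x * y⁆ = ⁅h, x⁆ * (x * ⁅h, y⁆ * x⁻¹) := by group
      rw [this]; exact N.mul_mem px (h3 x hx' _ py)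
  | inv x hx px =>
      have hx' : x⁻¹ ∈ K ⊔ B := by
        rw [Subgroup.sup_eq_closure]; exact inv_mem hx
      have : ⁅h, x⁻¹⁆ = x⁻¹ * ⁅h, x⁆⁻¹ * (x⁻¹)⁻¹ := by group
      rw [this]; exact h3 _ hx' _ (N.inv_mem px)

lemma iterCommutator_le_aux {A X B : Subgroup G} (I : ℕ → Subgroup G)
    (hA : A.Normal) (hXC : X ≤ Subgroup.centralizer (A : Set G)) (hX0 : X ≤ I 0)
    (hIstep : ∀ k, ⁅I k, B⁆ ≤ I (k + 1))
    (hnorm : ∀ k, ∀ g ∈ A ⊔ B, ∀ y ∈ I (k + 1), g * y * g⁻¹ ∈ I (k + 1)) :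
    ∀ k, iterCommutator X (A ⊔ B) k ≤ I k ⊓ Subgroup.centralizer (A : Set G)
  | 0 => le_inf hX0 hXC
  | (k + 1) => by
      have ih := iterCommutator_le_aux I hA hXC hX0 hIstep hnorm k
      have hIk : iterCommutator X (A ⊔ B) k ≤ I k := ih.trans inf_le_left
      have hCk : iterCommutator X (A ⊔ B) k ≤ Subgroup.centralizer (A : Set G) :=
        ih.trans inf_le_right
      refine le_inf ?_ ?_
      · exact commutator_sup_le_of_centralizes hCk
          ((Subgroup.commutator_mono hIk le_rfl).trans (hIstep k)) (hnorm k)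
      · exact commutator_le_of_le_normal hCk (centralizer_normal hA)

lemma chain_le {p : ℕ} {Q : ℕ → Subgroup G} {n : ℕ} (h : IsOliverChain p Q n)
    {i j : ℕ} (hij : i ≤ j) (hj : j ≤ n) : Q i ≤ Q j := by
  induction j, hij using Nat.le_induction with
  | base => exact le_rfl
  | succ j hij ih => exact (ih (by omega)).trans (h.2.1 j (by omega))

lemma hasOliverChain_extend {p : ℕ} {A : Subgroup G} (hA : HasOliverChain p A)
    (m : ℕ) (U : ℕ → Subgroup G) (hU0 : U 0 = A)
    (hUmono : ∀ j < m, U j ≤ U (j + 1))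
    (hUnorm : ∀ j ≤ m, (U j).Normal)
    (hUcomm : ∀ j < m,
      iterCommutator (Omega1 p (Subgroup.centralizer (U j : Set G))) (U (j + 1)) (p - 1) = ⊥) :
    HasOliverChain p (U m) := by
  obtain ⟨n, Q, ⟨hQ0, hQmono, hQnorm, hQcomm⟩, hQn⟩ := hA
  refine ⟨n + m, fun i => if i ≤ n then Q i else U (i - n), ⟨?_, ?_, ?_, ?_⟩, ?_⟩
  · simp [Nat.zero_le, hQ0]
  · intro i hi
    by_cases h1 : i + 1 ≤ n
    · simp only [if_pos h1, if_pos (by omega : i ≤ n)]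
      exact hQmono i (by omega)
    · by_cases h2 : i ≤ n
      · have hi' : i = n := by omega
        subst hi'
        simp only [if_pos h2, if_neg h1, Nat.add_sub_cancel_left]
        rw [hQn, ← hU0]
        exact hUmono 0 (by omega)
      · simp only [if_neg h1, if_neg h2, (by omega : i + 1 - n = (i - n) + 1)]
        exact hUmono (i - n) (by omega)
  · intro i hi
    by_cases h1 : i ≤ n
    · simp only [if_pos h1]; exact hQnorm i h1
    · simp only [if_neg h1]; exact hUnorm (i - n) (by omega)
  · intro i hi
    by_cases h1 : i + 1 ≤ n
    · simp only [if_pos h1, if_pos (by omega : i ≤ n)]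
      exact hQcomm i (by omega)
    · by_cases h2 : i ≤ n
      · have hi' : i = n := by omega
        subst hi'
        simp only [if_pos h2, if_neg h1, Nat.add_sub_cancel_left, hQn, ← hU0]
        exact hUcomm 0 (by omega)
      · simp only [if_neg h1, if_neg h2, (by omega : i + 1 - n = (i - n) + 1)]
        exact hUcomm (i - n) (by omega)
  · by_cases h1 : n + m ≤ n
    · have hm : m = 0 := by omega
      subst hm
      simp only [if_pos h1, Nat.add_zero, hQn, hU0]
      simp
    · simp only [if_neg h1, Nat.add_sub_cancel_left]

lemma hasOliverChain_sup {p : ℕ} {A B : Subgroup G}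
    (hA : HasOliverChain p A) (hB : HasOliverChain p B) :
    HasOliverChain p (A ⊔ B) := by
  have hAnorm : A.Normal := by
    obtain ⟨n, Q, hQ, hQn⟩ := hA
    exact hQn ▸ hQ.2.2.1 n le_rfl
  obtain ⟨m, R, ⟨hR0, hRmono, hRnorm, hRcomm⟩, hRm⟩ := hB
  have key := hasOliverChain_extend hA m (fun j => A ⊔ R j) (by simp [hR0])
    (fun j hj => sup_le_sup_left (hRmono j hj) A)
    (fun j hj => by
      haveI := hAnorm; haveI := hRnorm j hj
      exact Subgroup.sup_normal A (R j))
    ?_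
  · simpa only [hRm] using key
  intro j hj
  have hnormI : ∀ k, (iterCommutator (Omega1 p
      (Subgroup.centralizer (R j : Set G))) (R (j + 1)) k).Normal :=
    iterCommutator_normal (omega1_normal (centralizer_normal (hRnorm j (le_of_lt hj))))
      (hRnorm (j + 1) hj)
  have hmain := iterCommutator_le_aux
    (X := Omega1 p (Subgroup.centralizer ((A ⊔ R j : Subgroup G) : Set G)))
    (A := A) (B := R (j + 1))
    (fun k => iterCommutator (Omega1 p (Subgroup.centralizer (R j : Set G))) (R (j + 1)) k)
    hAnorm
    (omega1_le.trans (Subgroup.centralizer_le (SetLike.coe_subset_coe.2 le_sup_left)))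
    (omega1_mono (Subgroup.centralizer_le (SetLike.coe_subset_coe.2 le_sup_right)))
    (fun k => le_rfl)
    (fun k g _ y hy => (hnormI (k + 1)).conj_mem y hy g)
    (p - 1)
  refine le_bot_iff.1 (hmain.trans ?_)
  rw [hRcomm j hj]
  exact inf_le_left

lemma hasOliverChain_bot (p : ℕ) : HasOliverChain p (⊥ : Subgroup G) :=
  ⟨0, fun _ => ⊥, ⟨rfl, fun i hi => absurd hi (Nat.not_lt_zero i),
    fun _ _ => inferInstance, fun i hi => absurd hi (Nat.not_lt_zero i)⟩, rfl⟩

lemma hasOliverChain_oliver (p : ℕ) (G : Type*) [Group G] [Finite G] :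
    HasOliverChain p (OliverSubgroup p G) := by
  have key : ∀ s : Set (Subgroup G), s.Finite →
      (∀ K ∈ s, HasOliverChain p K) → HasOliverChain p (sSup s) := by
    intro s hs
    refine Set.Finite.induction_on
      (motive := fun s _ => (∀ K ∈ s, HasOliverChain p K) → HasOliverChain p (sSup s)) s hs
      (fun _ => by rw [sSup_empty]; exact hasOliverChain_bot p) ?_
    intro a t _ _ ih h
    rw [sSup_insert]
    exact hasOliverChain_sup (h a (Set.mem_insert a t))
      (ih fun K hK => h K (Set.mem_insert_of_mem a hK))
  exact key _ (Set.toFinite _) (fun K hK => hK)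

lemma oliver_normal (p : ℕ) (G : Type*) [Group G] [Finite G] :
    (OliverSubgroup p G).Normal := by
  obtain ⟨n, Q, hQ, hQn⟩ := hasOliverChain_oliver p G
  exact hQn ▸ hQ.2.2.1 n le_rfl

lemma exists_central_of_ne_bot {p : ℕ} [Fact p.Prime] [Finite G] (hG : IsPGroup p G)
    {N : Subgroup G} (hN : N.Normal) (hbot : N ≠ ⊥) :
    ∃ z : G, z ∈ N ∧ z ∈ Subgroup.center G ∧ z ≠ 1 := by
  haveI := hN
  letI : MulAction G N := MulAction.compHom _ (MulAut.conjNormal : G →* MulAut N)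
  have hsmul : ∀ (g : G) (n : N), g • n = MulAut.conjNormal g n := fun g n => rfl
  have hdvd : p ∣ Nat.card N := by
    obtain ⟨k, hk⟩ := IsPGroup.iff_card.mp (hG.to_subgroup N)
    have hk0 : k ≠ 0 := by
      rintro rfl
      rw [pow_zero, Subgroup.card_eq_one] at hk
      exact hbot hk
    rw [hk]
    exact dvd_pow_self p hk0
  have h1 : (1 : N) ∈ MulAction.fixedPoints G N := by
    intro g
    rw [hsmul, map_one]
  obtain ⟨b, hb, hb1⟩ := hG.exists_fixed_point_of_prime_dvd_card_of_fixed_point (α := N) hdvd h1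
  refine ⟨(b : G), b.2, ?_, ?_⟩
  · rw [Subgroup.mem_center_iff]
    intro g
    have h2 : g * (b : G) * g⁻¹ = (b : G) := by
      have := hb g
      rw [hsmul] at this
      calc g * (b : G) * g⁻¹ = ((MulAut.conjNormal g b : N) : G) := by
            rw [MulAut.conjNormal_apply]
        _ = (b : G) := by rw [this]
    calc g * (b : G) = (g * (b : G) * g⁻¹) * g := by group
      _ = (b : G) * g := by rw [h2]
  · intro h
    exact hb1 (Subtype.ext h.symm)

lemma centralizer_oliver_le {p : ℕ} [Fact p.Prime] (hp : Odd p) [Finite G]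
    (hG : IsPGroup p G) :
    Subgroup.centralizer ((OliverSubgroup p G : Subgroup G) : Set G) ≤ OliverSubgroup p G := by
  set Xg := OliverSubgroup p G with hXgdef
  have hXnorm : Xg.Normal := oliver_normal p G
  haveI := hXnorm
  by_contra hcon
  set C := Subgroup.centralizer (Xg : Set G) with hCdef
  have hCnorm : C.Normal := centralizer_normal hXnorm
  set π := QuotientGroup.mk' Xg with hπdef
  have hNnorm : (Xg ⊔ C).Normal := by
    haveI := hCnorm
    exact Subgroup.sup_normal Xg C
  have hNqnorm : (Subgroup.map π (Xg ⊔ C)).Normal :=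
    hNnorm.map π (QuotientGroup.mk'_surjective Xg)
  have hNqbot : Subgroup.map π (Xg ⊔ C) ≠ ⊥ := by
    rw [Ne, Subgroup.map_eq_bot_iff, hπdef, QuotientGroup.ker_mk']
    intro hle
    exact hcon (le_sup_right.trans hle)
  obtain ⟨z, hzN, hzc, hz1⟩ := exists_central_of_ne_bot (hG.to_quotient Xg) hNqnorm hNqbot
  set P := Subgroup.comap π (Subgroup.zpowers z) with hPdef
  have hzpc : Subgroup.zpowers z ≤ Subgroup.center (G ⧸ Xg) := Subgroup.zpowers_le.2 hzc
  have hPnorm : P.Normal := by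
    refine Subgroup.Normal.comap ?_ π
    constructor
    intro a ha g
    have hga : g * a * g⁻¹ = a := by
      have h := (Subgroup.mem_center_iff.1 (hzpc ha)) g
      calc g * a * g⁻¹ = a * g * g⁻¹ := by rw [h]
        _ = a := by group
    rw [hga]; exact ha
  have hXleP : Xg ≤ P := by
    intro x hx
    rw [hPdef, Subgroup.mem_comap]
    have hx1 : π x = 1 := (QuotientGroup.eq_one_iff x).2 hx
    rw [hx1]; exact Subgroup.one_mem _
  have hPle : P ≤ Xg ⊔ C := by
    intro x hx
    rw [hPdef, Subgroup.mem_comap] at hx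
    have h1 : π x ∈ Subgroup.map π (Xg ⊔ C) := by
      obtain ⟨k, hk⟩ := Subgroup.mem_zpowers_iff.1 hx
      rw [← hk]; exact zpow_mem hzN k
    have h2 : x ∈ Subgroup.comap π (Subgroup.map π (Xg ⊔ C)) := h1
    rw [Subgroup.comap_map_eq, hπdef, QuotientGroup.ker_mk',
      sup_eq_left.2 (le_sup_left : Xg ≤ Xg ⊔ C)] at h2
    exact h2
  have hM1 : ⁅Omega1 p C, P⁆ ≤ Xg ⊓ C := by
    refine le_inf ?_ (commutator_le_of_le_normal omega1_le hCnorm)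
    rw [Subgroup.commutator_le]
    intro a _ b hb
    have hbz : π b ∈ Subgroup.center (G ⧸ Xg) := hzpc ((Subgroup.mem_comap).1 hb)
    have hcomm : π a * π b = π b * π a := (Subgroup.mem_center_iff.1 hbz) (π a)
    have hone : π ⁅a, b⁆ = 1 := by
      rw [map_commutatorElement]
      exact commutatorElement_eq_one_iff_mul_comm.2 hcomm
    have hker : ⁅a, b⁆ ∈ π.ker := hone
    rwa [hπdef, QuotientGroup.ker_mk'] at hker
  have hM2 : ⁅(⁅Omega1 p C, P⁆ : Subgroup G), P⁆ = ⊥ := by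
    rw [Subgroup.commutator_eq_bot_iff_le_centralizer, Subgroup.le_centralizer_iff]
    refine hPle.trans (sup_le ?_ ?_)
    · exact Subgroup.le_centralizer_iff.mpr
        ((hM1.trans inf_le_right).trans (le_of_eq hCdef))
    · exact Subgroup.le_centralizer_iff.mpr
        ((hM1.trans inf_le_left).trans (Subgroup.le_centralizer_iff.mpr (le_of_eq hCdef)))
  have hp2 : 2 ≤ p - 1 := by
    have h2 := (Fact.out : p.Prime).two_le
    obtain ⟨k, hk⟩ := hp
    omega
  have hiter : iterCommutator (Omega1 p C) P (p - 1) = ⊥ := by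
    refine iterCommutator_eq_bot_of (j := 2) ?_ hp2
    show ⁅(⁅Omega1 p C, P⁆ : Subgroup G), P⁆ = ⊥
    exact hM2
  have hchainP : HasOliverChain p P := by
    have h := hasOliverChain_extend (hasOliverChain_oliver p G) 1
      (fun j => if j = 0 then Xg else P)
      (by show (if (0 : ℕ) = 0 then Xg else P) = OliverSubgroup p G; rw [if_pos rfl])
      (fun j hj => by
        have hj0 : j = 0 := by omega
        subst hj0
        simpa using hXleP)
      (fun j _ => by
        by_cases h0 : j = 0
        · subst h0; simpa using hXnorm
        · simpa [h0] using hPnorm)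
      (fun j hj => by
        have hj0 : j = 0 := by omega
        subst hj0
        norm_num
        exact hiter)
    simpa using h
  have hPX : P ≤ Xg := le_sSup hchainP
  obtain ⟨x, hx⟩ := QuotientGroup.mk'_surjective Xg z
  have hxP : x ∈ P := by
    rw [hPdef, Subgroup.mem_comap]
    exact hx ▸ Subgroup.mem_zpowers z
  exact hz1 (by rw [← hx]; exact (QuotientGroup.eq_one_iff x).2 (hPX hxP))

lemma conj_mem_map_of_normal {L : Subgroup G} {H : Subgroup L} (hH : H.Normal)
    {g y : G} (hg : g ∈ L) (hy : y ∈ Subgroup.map L.subtype H) :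
    g * y * g⁻¹ ∈ Subgroup.map L.subtype H := by
  obtain ⟨y', hy', rfl⟩ := hy
  exact ⟨(⟨g, hg⟩ : L) * y' * (⟨g, hg⟩ : L)⁻¹, hH.conj_mem y' hy' _, rfl⟩

lemma oliver_le_map {p : ℕ} [Finite G] (L : Subgroup G) (hL : OliverSubgroup p G ≤ L) :
    OliverSubgroup p G ≤ Subgroup.map L.subtype (OliverSubgroup p L) := by
  obtain ⟨n, Q, hQ, hQn⟩ := hasOliverChain_oliver p G
  have hQle : ∀ i, i ≤ n → Q i ≤ L := fun i hi => (chain_le hQ hi le_rfl).trans (hQn ▸ hL)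
  have hmapQ' : ∀ i, i ≤ n →
      Subgroup.map L.subtype (Subgroup.comap L.subtype (Q i)) = Q i := by
    intro i hi
    rw [Subgroup.map_comap_eq, Subgroup.range_subtype]
    exact inf_eq_right.mpr (hQle i hi)
  obtain ⟨hQ0, hQmono, hQnorm, hQcomm⟩ := hQ
  have hchain' : IsOliverChain p (fun i => Subgroup.comap L.subtype (Q i)) n := by
    refine ⟨?_, ?_, ?_, ?_⟩
    · show Subgroup.comap L.subtype (Q 0) = ⊥
      rw [hQ0]
      refine le_bot_iff.1 fun x hx => ?_
      have : L.subtype x = 1 := hx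
      exact Subgroup.subtype_injective L (by simpa using this)
    · exact fun i hi => Subgroup.comap_mono (hQmono i hi)
    · exact fun i hi => (hQnorm i hi).comap _
    · intro i hi
      refine (Subgroup.map_eq_bot_iff_of_injective _ (Subgroup.subtype_injective L)).1 ?_
      rw [iterCommutator_map]
      refine le_bot_iff.1 ?_
      have h1 : Subgroup.map L.subtype
          (Omega1 p (Subgroup.centralizer
            ((Subgroup.comap L.subtype (Q i) : Subgroup L) : Set L)))
          ≤ Omega1 p (Subgroup.centralizer (Q i : Set G)) := by
        rw [Subgroup.map_le_iff_le_comap]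
        refine (Subgroup.closure_le _).2 ?_
        rintro x ⟨hxc, hxp⟩
        rw [SetLike.mem_coe, Subgroup.mem_comap]
        refine Subgroup.subset_closure ⟨?_, ?_⟩
        · intro q hq
          have hqL : q ∈ L := hQle i (by omega) hq
          have hq' : (⟨q, hqL⟩ : L) ∈ Subgroup.comap L.subtype (Q i) := hq
          exact congrArg Subtype.val (hxc _ hq')
        · show (L.subtype x) ^ p = 1
          rw [← map_pow, hxp, map_one]
      calc iterCommutator _ _ (p - 1)
          ≤ iterCommutator (Omega1 p (Subgroup.centralizer (Q i : Set G))) (Q (i + 1))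
            (p - 1) := iterCommutator_mono h1 (le_of_eq (hmapQ' (i + 1) hi)) (p - 1)
        _ = ⊥ := hQcomm i hi
  calc OliverSubgroup p G
      = Subgroup.map L.subtype (Subgroup.comap L.subtype (Q n)) := by
        rw [hmapQ' n le_rfl, hQn]
    _ ≤ Subgroup.map L.subtype (OliverSubgroup p L) :=
        Subgroup.map_mono (le_sSup ⟨n, _, hchain', rfl⟩)

end OliverAux

/-- if every subgroup `L` with `𝔛(S) ≤ L ≤ J(S)𝔛(S)` is normal in `S`,
then `𝔛(L) = 𝔛(S)` for all such `L`. -/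
theorem oliver_eq_of_all_normal (p : ℕ) [Fact p.Prime] (hp : Odd p)
    (S : Type*) [Group S] [Fintype S] (hS : IsPGroup p S)
    (hnormal : ∀ L : Subgroup S, OliverSubgroup p S ≤ L →
      L ≤ Thompson p S ⊔ OliverSubgroup p S → L.Normal) :
    ∀ L : Subgroup S, OliverSubgroup p S ≤ L → L ≤ Thompson p S ⊔ OliverSubgroup p S →
      Subgroup.map L.subtype (OliverSubgroup p L) = OliverSubgroup p S := by
  intro L hXL hLJ
  have hXnorm : (OliverSubgroup p S).Normal := OliverAux.oliver_normal p S
  have hCX : Subgroup.centralizer ((OliverSubgroup p S : Subgroup S) : Set S)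
      ≤ OliverSubgroup p S := OliverAux.centralizer_oliver_le hp hS
  apply le_antisymm
  · -- map L.subtype (𝔛 L) ≤ 𝔛 S
    have key : ∀ K' : Subgroup L, HasOliverChain p K' →
        Subgroup.map L.subtype K' ≤ OliverSubgroup p S := by
      intro K' hK'
      obtain ⟨m, R, ⟨hR0, hRmono, hRnorm, hRcomm⟩, hRm⟩ := hK'
      have hUcomm : ∀ j < m, iterCommutator (Omega1 p (Subgroup.centralizer
          ((OliverSubgroup p S ⊔ Subgroup.map L.subtype (R j) : Subgroup S) : Set S)))
          (OliverSubgroup p S ⊔ Subgroup.map L.subtype (R (j + 1))) (p - 1) = ⊥ := by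
        intro j hj
        have hInorm : ∀ k, (iterCommutator (Omega1 p (Subgroup.centralizer
            ((R j : Subgroup L) : Set L))) (R (j + 1)) k).Normal :=
          OliverAux.iterCommutator_normal
            (OliverAux.omega1_normal (OliverAux.centralizer_normal (hRnorm j (le_of_lt hj))))
            (hRnorm (j + 1) hj)
        have hmain := OliverAux.iterCommutator_le_aux
          (A := OliverSubgroup p S) (B := Subgroup.map L.subtype (R (j + 1)))
          (X := Omega1 p (Subgroup.centralizer
            ((OliverSubgroup p S ⊔ Subgroup.map L.subtype (R j) : Subgroup S) : Set S)))
          (fun k => Subgroup.map L.subtype (iterCommutator (Omega1 p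
            (Subgroup.centralizer ((R j : Subgroup L) : Set L))) (R (j + 1)) k))
          hXnorm
          (OliverAux.omega1_le.trans
            (Subgroup.centralizer_le (SetLike.coe_subset_coe.2 le_sup_left)))
          ?_ (fun k => (Subgroup.map_commutator _ _ L.subtype).ge) ?_ (p - 1)
        · refine le_bot_iff.1 (hmain.trans (inf_le_left.trans (le_of_eq ?_)))
          rw [hRcomm j hj, Subgroup.map_bot]
        · -- X ≤ I 0
          refine (Subgroup.closure_le _).2 ?_
          rintro x ⟨hxc, hxp⟩
          have hxX : x ∈ OliverSubgroup p S :=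
            hCX (Subgroup.centralizer_le (SetLike.coe_subset_coe.2 le_sup_left) hxc)
          have hxL : x ∈ L := hXL hxX
          refine ⟨⟨x, hxL⟩, Subgroup.subset_closure ⟨?_, ?_⟩, rfl⟩
          · intro q hq
            have hq' : (q : S) ∈ OliverSubgroup p S ⊔ Subgroup.map L.subtype (R j) :=
              Subgroup.mem_sup_right (⟨q, hq, rfl⟩ : (q : S) ∈ Subgroup.map L.subtype (R j))
            exact Subtype.ext (hxc _ hq')
          · exact Subtype.ext (by simpa using hxp)
        · -- conjugation stability
          intro k g hg y hy
          have hgL : g ∈ L := (sup_le hXL (Subgroup.map_subtype_le _)) hg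
          exact OliverAux.conj_mem_map_of_normal (hInorm (k + 1)) hgL hy
      have hchain := OliverAux.hasOliverChain_extend (OliverAux.hasOliverChain_oliver p S) m
        (fun j => OliverSubgroup p S ⊔ Subgroup.map L.subtype (R j))
        (by show OliverSubgroup p S ⊔ Subgroup.map L.subtype (R 0) = _
            rw [hR0, Subgroup.map_bot, sup_bot_eq])
        (fun j hj => sup_le_sup_left (Subgroup.map_mono (hRmono j hj)) _)
        (fun j _ => hnormal _ le_sup_left
          (sup_le le_sup_right ((Subgroup.map_subtype_le _).trans hLJ)))
        hUcomm
      have h2 : OliverSubgroup p S ⊔ Subgroup.map L.subtype K' ≤ OliverSubgroup p S :=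
        le_sSup (by simpa only [hRm, Set.mem_setOf_eq] using hchain)
      exact le_sup_right.trans h2
    show Subgroup.map L.subtype (sSup {K : Subgroup L | HasOliverChain p K})
      ≤ OliverSubgroup p S
    rw [(Subgroup.gc_map_comap L.subtype).l_sSup]
    exact iSup₂_le fun K' hK' => key K' hK'
  · exact OliverAux.oliver_le_map L hXL
end
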